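/- Let A, B be n×n positive semidefinite complex matrices and let t ∈ [1/4, 3/4]. Then ‖A^t B^(1-t) + B^t A^(1-t)‖_F ≤ ‖A + B‖_F, where ‖·‖_F is the Frobenius norm. -/

import Mathlib

open scoped ComplexOrder

/-- The real power `A ^ r` of a (positive semidefinite) matrix, defined via the
continuous functional calculus (equivalently, via the spectral decomposition). -/
noncomputable def matRpow {n : ℕ} (A : Matrix (Fin n) (Fin n) ℂ) (r : ℝ) :
    Matrix (Fin n) (Fin n) ℂ :=
  cfc (fun x : ℝ => x ^ r) A

/-- The Frobenius (Hilbert–Schmidt) norm `‖M‖_F = (∑_{i,j} |M_{ij}|²)^{1/2}`. -/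
noncomputable def frobeniusNorm' {n : ℕ} (M : Matrix (Fin n) (Fin n) ℂ) : ℝ :=
  Real.sqrt (∑ i, ∑ j, ‖M i j‖ ^ 2)

namespace CrossedHeinzAux

open Matrix Finset

variable {n : ℕ}

/-! ### Scalar inequality -/

private lemma rpow_sq {x : ℝ} (hx : 0 < x) (p : ℝ) : (x ^ p) ^ 2 = x ^ (2 * p) := by
  rw [sq, ← Real.rpow_add hx]; ring_nf

set_option maxHeartbeats 1000000 in
/-- The scalar core inequality: for `x, y ≥ 0` and `t ∈ [1/4, 3/4]`,
`2((x^t y^(1-t))² + (x^(1-t) y^t)²) ≤ x² + y² + 2xy`. -/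
lemma scalar_core {x y t : ℝ} (hx : 0 ≤ x) (hy : 0 ≤ y)
    (h1 : 1 / 4 ≤ t) (h2 : t ≤ 3 / 4) :
    2 * ((x ^ t * y ^ (1 - t)) ^ 2 + (x ^ (1 - t) * y ^ t) ^ 2)
      ≤ x ^ 2 + y ^ 2 + 2 * (x * y) := by
  have ht0' : (0:ℝ) < t := by linarith
  have ht1' : (0:ℝ) < 1 - t := by linarith
  have ht0 : t ≠ 0 := ht0'.ne'
  have ht1 : 1 - t ≠ 0 := ht1'.ne'
  rcases eq_or_lt_of_le hx with hx0 | hx0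
  · rw [← hx0, Real.zero_rpow ht0, Real.zero_rpow ht1]
    simp
    positivity
  rcases eq_or_lt_of_le hy with hy0 | hy0
  · rw [← hy0, Real.zero_rpow ht0, Real.zero_rpow ht1]
    simp
    positivity
  -- now x, y > 0
  set s : ℝ := 2 * t with hs
  have hs1 : 1 / 2 ≤ s := by rw [hs]; linarith
  have hs2 : s ≤ 3 / 2 := by rw [hs]; linarith
  have e1 : (x ^ t * y ^ (1 - t)) ^ 2 = x ^ s * y ^ (2 - s) := by
    rw [mul_pow, rpow_sq hx0, rpow_sq hy0, hs, show (2:ℝ) * (1 - t) = 2 - 2 * t by ring]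
  have e2 : (x ^ (1 - t) * y ^ t) ^ 2 = x ^ (2 - s) * y ^ s := by
    rw [mul_pow, rpow_sq hx0, rpow_sq hy0, hs, show (2:ℝ) * (1 - t) = 2 - 2 * t by ring]
  rw [e1, e2]
  -- factorization step
  have hfac : 0 ≤ (x ^ (s - 1/2) - y ^ (s - 1/2)) * (x ^ (3/2 - s) - y ^ (3/2 - s)) := by
    rcases le_total x y with h | h
    · have u1 := sub_nonpos.mpr (Real.rpow_le_rpow hx h (show (0:ℝ) ≤ s - 1/2 by linarith))
      have u2 := sub_nonpos.mpr (Real.rpow_le_rpow hx h (show (0:ℝ) ≤ 3/2 - s by linarith))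
      nlinarith [mul_nonneg (neg_nonneg.mpr u1) (neg_nonneg.mpr u2)]
    · exact mul_nonneg
        (sub_nonneg.mpr (Real.rpow_le_rpow hy h (by linarith)))
        (sub_nonneg.mpr (Real.rpow_le_rpow hy h (by linarith)))
  have hxx : x ^ (s - 1/2) * x ^ (3/2 - s) = x := by
    rw [← Real.rpow_add hx0]; norm_num
  have hyy : y ^ (s - 1/2) * y ^ (3/2 - s) = y := by
    rw [← Real.rpow_add hy0]; norm_num
  have hsum : x ^ (s - 1/2) * y ^ (3/2 - s) + x ^ (3/2 - s) * y ^ (s - 1/2) ≤ x + y := by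
    nlinarith [hfac]
  have hw : (0 : ℝ) ≤ x ^ (1/2 : ℝ) * y ^ (1/2 : ℝ) :=
    mul_nonneg (Real.rpow_nonneg hx _) (Real.rpow_nonneg hy _)
  have e3 : x ^ (1/2 : ℝ) * y ^ (1/2 : ℝ) * (x ^ (s - 1/2) * y ^ (3/2 - s))
      = x ^ s * y ^ (2 - s) := by
    rw [show x ^ s = x ^ (1/2 : ℝ) * x ^ (s - 1/2) by rw [← Real.rpow_add hx0]; ring_nf,
        show y ^ (2 - s) = y ^ (1/2 : ℝ) * y ^ (3/2 - s) by rw [← Real.rpow_add hy0]; ring_nf]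
    ring
  have e4 : x ^ (1/2 : ℝ) * y ^ (1/2 : ℝ) * (x ^ (3/2 - s) * y ^ (s - 1/2))
      = x ^ (2 - s) * y ^ s := by
    rw [show x ^ (2 - s) = x ^ (1/2 : ℝ) * x ^ (3/2 - s) by rw [← Real.rpow_add hx0]; ring_nf,
        show y ^ s = y ^ (1/2 : ℝ) * y ^ (s - 1/2) by rw [← Real.rpow_add hy0]; ring_nf]
    ring
  have key : x ^ s * y ^ (2 - s) + x ^ (2 - s) * y ^ s
      ≤ x ^ (1/2 : ℝ) * y ^ (1/2 : ℝ) * (x + y) := by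
    have := mul_le_mul_of_nonneg_left hsum hw
    rw [mul_add, e3, e4] at this
    linarith
  -- AM-GM finish
  have hxh : (x ^ (1/2 : ℝ)) ^ 2 = x := by rw [rpow_sq hx0]; norm_num
  have hyh : (y ^ (1/2 : ℝ)) ^ 2 = y := by rw [rpow_sq hy0]; norm_num
  have hamgm : 2 * (x ^ (1/2 : ℝ) * y ^ (1/2 : ℝ)) ≤ x + y := by
    nlinarith [sq_nonneg (x ^ (1/2 : ℝ) - y ^ (1/2 : ℝ))]
  have hfin : 2 * (x ^ (1/2 : ℝ) * y ^ (1/2 : ℝ)) * (x + y) ≤ (x + y) ^ 2 := by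
    have h' := mul_le_mul_of_nonneg_right hamgm (add_nonneg hx hy)
    have h'' : (x + y) * (x + y) = (x + y) ^ 2 := by ring
    linarith
  have hexp : (x + y) ^ 2 = x ^ 2 + y ^ 2 + 2 * (x * y) := by ring
  linarith [key, hfin]


/-! ### Frobenius norm facts -/

lemma fro_eq_norm (P : Matrix (Fin n) (Fin n) ℂ) :
    frobeniusNorm' P = ‖(WithLp.toLp 2 (fun p : Fin n × Fin n => P p.1 p.2) : EuclideanSpace ℂ (Fin n × Fin n))‖ := by
  rw [frobeniusNorm', EuclideanSpace.norm_eq, Fintype.sum_prod_type]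

lemma fro_triangle (M N : Matrix (Fin n) (Fin n) ℂ) :
    frobeniusNorm' (M + N) ≤ frobeniusNorm' M + frobeniusNorm' N := by
  rw [fro_eq_norm, fro_eq_norm, fro_eq_norm]
  exact norm_add_le (WithLp.toLp 2 (fun p : Fin n × Fin n => M p.1 p.2) : EuclideanSpace ℂ (Fin n × Fin n))
    (WithLp.toLp 2 (fun p : Fin n × Fin n => N p.1 p.2))

lemma sum_norm_sq_eq_trace (M : Matrix (Fin n) (Fin n) ℂ) :
    ((∑ i, ∑ j, ‖M i j‖ ^ 2 : ℝ) : ℂ) = Matrix.trace (Mᴴ * M) := by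
  simp only [Matrix.trace, Matrix.diag, Matrix.mul_apply, Matrix.conjTranspose_apply]
  rw [Finset.sum_comm]
  push_cast
  refine Finset.sum_congr rfl fun i _ => Finset.sum_congr rfl fun j _ => ?_
  rw [RCLike.star_def, RCLike.conj_mul]
  norm_cast

/-! ### Trace computations via spectral data -/

lemma trace_dwez (dc ec : Fin n → ℂ) (W Z : Matrix (Fin n) (Fin n) ℂ) :
    Matrix.trace (Matrix.diagonal dc * (W * (Matrix.diagonal ec * Z)))
      = ∑ i, ∑ j, dc i * W i j * (ec j * Z j i) := by
  simp only [Matrix.trace, Matrix.diag]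
  refine Finset.sum_congr rfl fun i _ => ?_
  rw [Matrix.diagonal_mul, Matrix.mul_apply, Finset.mul_sum]
  refine Finset.sum_congr rfl fun j _ => ?_
  rw [Matrix.diagonal_mul]
  ring

lemma trace_core (U V : Matrix (Fin n) (Fin n) ℂ) (d e : Fin n → ℝ) :
    Matrix.trace ((U * Matrix.diagonal (fun i => (d i : ℂ)) * star U) *
        (V * Matrix.diagonal (fun j => (e j : ℂ)) * star V))
      = ((∑ i, ∑ j, d i * e j * ‖(star U * V) i j‖ ^ 2 : ℝ) : ℂ) := by
  have h1 : (U * Matrix.diagonal (fun i => (d i : ℂ)) * star U) *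
        (V * Matrix.diagonal (fun j => (e j : ℂ)) * star V)
      = U * (Matrix.diagonal (fun i => (d i : ℂ)) *
          ((star U * V) * (Matrix.diagonal (fun j => (e j : ℂ)) * star V))) := by
    simp only [Matrix.mul_assoc]
  rw [h1, Matrix.trace_mul_comm]
  have h2 : Matrix.diagonal (fun i => (d i : ℂ)) *
        ((star U * V) * (Matrix.diagonal (fun j => (e j : ℂ)) * star V)) * U
      = Matrix.diagonal (fun i => (d i : ℂ)) *
          ((star U * V) * (Matrix.diagonal (fun j => (e j : ℂ)) * (star V * U))) := by
    simp only [Matrix.mul_assoc]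
  rw [h2, trace_dwez]
  have hZ : star V * U = star (star U * V) := by rw [Matrix.star_mul, star_star]
  push_cast
  refine Finset.sum_congr rfl fun i _ => Finset.sum_congr rfl fun j _ => ?_
  rw [hZ, Matrix.star_apply]
  have hz : (star U * V) i j * star ((star U * V) i j)
      = ((‖(star U * V) i j‖ : ℝ) : ℂ) ^ 2 := by
    rw [RCLike.star_def, RCLike.mul_conj]; norm_cast
  linear_combination ((d i : ℂ) * (e j : ℂ)) * hz

lemma rep_herm (U : Matrix (Fin n) (Fin n) ℂ) (d : Fin n → ℝ) :
    (U * Matrix.diagonal (fun i => (d i : ℂ)) * star U)ᴴ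
      = U * Matrix.diagonal (fun i => (d i : ℂ)) * star U := by
  have hd : star (fun i => ((d i : ℝ) : ℂ)) = fun i => ((d i : ℝ) : ℂ) := by
    funext i; simp [Complex.conj_ofReal]
  simp [Matrix.star_eq_conjTranspose, Matrix.conjTranspose_mul,
    Matrix.diagonal_conjTranspose, hd, Matrix.mul_assoc]

lemma rep_mul (U : Matrix (Fin n) (Fin n) ℂ) (hU : star U * U = 1) (d e : Fin n → ℝ) :
    (U * Matrix.diagonal (fun i => (d i : ℂ)) * star U) *
        (U * Matrix.diagonal (fun i => (e i : ℂ)) * star U)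
      = U * Matrix.diagonal (fun i => ((d i * e i : ℝ) : ℂ)) * star U := by
  have hde : Matrix.diagonal (fun i => (d i : ℂ)) * Matrix.diagonal (fun i => (e i : ℂ))
      = Matrix.diagonal (fun i => ((d i * e i : ℝ) : ℂ)) := by
    rw [Matrix.diagonal_mul_diagonal]
    funext i
    norm_cast
  simp only [Matrix.mul_assoc]
  rw [← Matrix.mul_assoc (star U) U, hU, Matrix.one_mul,
    ← Matrix.mul_assoc (Matrix.diagonal _) (Matrix.diagonal _), hde]

lemma sum_w_one (d e : Fin n → ℝ) :
    ∑ i, ∑ j, d i * e j * ‖(1 : Matrix (Fin n) (Fin n) ℂ) i j‖ ^ 2 = ∑ i, d i * e i := by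
  refine Finset.sum_congr rfl fun i _ => ?_
  rw [Finset.sum_eq_single i]
  · simp [Matrix.one_apply]
  · intro j _ hj
    simp [Matrix.one_apply_ne (Ne.symm hj)]
  · intro h; exact absurd (Finset.mem_univ i) h

lemma row_sum (W : Matrix (Fin n) (Fin n) ℂ) (hW : W * star W = 1) (i : Fin n) :
    ∑ j, ‖W i j‖ ^ 2 = 1 := by
  have h : ((∑ j, ‖W i j‖ ^ 2 : ℝ) : ℂ) = (W * star W) i i := by
    rw [Matrix.mul_apply]
    push_cast
    refine (Finset.sum_congr rfl fun j _ => ?_).symm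
    rw [Matrix.star_apply, RCLike.star_def, RCLike.mul_conj]
    norm_cast
  rw [hW] at h
  simp only [Matrix.one_apply_eq] at h
  exact_mod_cast h

lemma col_sum (W : Matrix (Fin n) (Fin n) ℂ) (hW : star W * W = 1) (j : Fin n) :
    ∑ i, ‖W i j‖ ^ 2 = 1 := by
  have h : ((∑ i, ‖W i j‖ ^ 2 : ℝ) : ℂ) = (star W * W) j j := by
    rw [Matrix.mul_apply]
    push_cast
    refine (Finset.sum_congr rfl fun i _ => ?_).symm
    rw [Matrix.star_apply, RCLike.star_def, RCLike.conj_mul]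
    norm_cast
  rw [hW] at h
  simp only [Matrix.one_apply_eq] at h
  exact_mod_cast h

lemma matRpow_rep {A : Matrix (Fin n) (Fin n) ℂ} (hA : A.PosSemidef) (r : ℝ) :
    matRpow A r = (hA.1.eigenvectorUnitary : Matrix (Fin n) (Fin n) ℂ) *
      Matrix.diagonal (fun i => ((hA.1.eigenvalues i ^ r : ℝ) : ℂ)) *
      star (hA.1.eigenvectorUnitary : Matrix (Fin n) (Fin n) ℂ) := by
  rw [matRpow, hA.1.cfc_eq, Matrix.IsHermitian.cfc]
  rfl

lemma spectral_rep {A : Matrix (Fin n) (Fin n) ℂ} (hA : A.PosSemidef) :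
    A = (hA.1.eigenvectorUnitary : Matrix (Fin n) (Fin n) ℂ) *
      Matrix.diagonal (fun i => ((hA.1.eigenvalues i : ℝ) : ℂ)) *
      star (hA.1.eigenvectorUnitary : Matrix (Fin n) (Fin n) ℂ) :=
  hA.1.spectral_theorem

set_option maxHeartbeats 1000000 in
/-- The main inequality, stated for explicit spectral data. -/
lemma key_ineq (t : ℝ) (ht1 : 1 / 4 ≤ t) (ht2 : t ≤ 3 / 4)
    (U V : Matrix (Fin n) (Fin n) ℂ) (a b : Fin n → ℝ)
    (ha : ∀ i, 0 ≤ a i) (hb : ∀ j, 0 ≤ b j)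
    (hU1 : star U * U = 1) (hU2 : U * star U = 1)
    (hV1 : star V * V = 1) (hV2 : V * star V = 1) :
    frobeniusNorm'
      ((U * Matrix.diagonal (fun i => ((a i ^ t : ℝ) : ℂ)) * star U) *
          (V * Matrix.diagonal (fun j => ((b j ^ (1 - t) : ℝ) : ℂ)) * star V) +
        (V * Matrix.diagonal (fun j => ((b j ^ t : ℝ) : ℂ)) * star V) *
          (U * Matrix.diagonal (fun i => ((a i ^ (1 - t) : ℝ) : ℂ)) * star U)) ≤
      frobeniusNorm'
        ((U * Matrix.diagonal (fun i => ((a i : ℝ) : ℂ)) * star U) +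
          (V * Matrix.diagonal (fun j => ((b j : ℝ) : ℂ)) * star V)) := by
  have hw0 : ∀ i j : Fin n, (0 : ℝ) ≤ ‖(star U * V) i j‖ ^ 2 := fun i j => sq_nonneg _
  -- row and column sums of the weights
  have hWW1 : (star U * V) * star (star U * V) = 1 := by
    rw [Matrix.star_mul, star_star]
    calc star U * V * (star V * U) = star U * (V * star V * U) := by
          simp only [Matrix.mul_assoc]
      _ = 1 := by rw [hV2, Matrix.one_mul, hU1]
  have hWW2 : star (star U * V) * (star U * V) = 1 := by
    rw [Matrix.star_mul, star_star]
    calc star V * U * (star U * V) = star V * (U * star U * V) := by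
          simp only [Matrix.mul_assoc]
      _ = 1 := by rw [hU2, Matrix.one_mul, hV1]
  have hWr : ∀ i, ∑ j, ‖(star U * V) i j‖ ^ 2 = 1 := row_sum _ hWW1
  have hWc : ∀ j, ∑ i, ‖(star U * V) i j‖ ^ 2 = 1 := col_sum _ hWW2
  -- abbreviations
  set M := (U * Matrix.diagonal (fun i => ((a i ^ t : ℝ) : ℂ)) * star U) *
      (V * Matrix.diagonal (fun j => ((b j ^ (1 - t) : ℝ) : ℂ)) * star V) with hM
  set N := (V * Matrix.diagonal (fun j => ((b j ^ t : ℝ) : ℂ)) * star V) *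
      (U * Matrix.diagonal (fun i => ((a i ^ (1 - t) : ℝ) : ℂ)) * star U) with hN
  set F : ℝ := ∑ i, ∑ j, (a i ^ t * a i ^ t) * (b j ^ (1 - t) * b j ^ (1 - t)) *
      ‖(star U * V) i j‖ ^ 2 with hF
  set G : ℝ := ∑ i, ∑ j, (a i ^ (1 - t) * a i ^ (1 - t)) * (b j ^ t * b j ^ t) *
      ‖(star U * V) i j‖ ^ 2 with hG
  have hFnn : 0 ≤ F := by
    rw [hF]
    refine Finset.sum_nonneg fun i _ => Finset.sum_nonneg fun j _ => ?_
    have h1 : 0 ≤ a i ^ t * a i ^ t := mul_self_nonneg _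
    have h2 : 0 ≤ b j ^ (1 - t) * b j ^ (1 - t) := mul_self_nonneg _
    exact mul_nonneg (mul_nonneg h1 h2) (hw0 i j)
  have hGnn : 0 ≤ G := by
    rw [hG]
    refine Finset.sum_nonneg fun i _ => Finset.sum_nonneg fun j _ => ?_
    have h1 : 0 ≤ a i ^ (1 - t) * a i ^ (1 - t) := mul_self_nonneg _
    have h2 : 0 ≤ b j ^ t * b j ^ t := mul_self_nonneg _
    exact mul_nonneg (mul_nonneg h1 h2) (hw0 i j)
  -- ‖M‖² = F
  have hM2 : ∑ i, ∑ j, ‖M i j‖ ^ 2 = F := by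
    have h1 : ((∑ i, ∑ j, ‖M i j‖ ^ 2 : ℝ) : ℂ) = ((F : ℝ) : ℂ) := by
      rw [sum_norm_sq_eq_trace]
      have hMH : Mᴴ = (V * Matrix.diagonal (fun j => ((b j ^ (1 - t) : ℝ) : ℂ)) * star V) *
          (U * Matrix.diagonal (fun i => ((a i ^ t : ℝ) : ℂ)) * star U) := by
        rw [hM, Matrix.conjTranspose_mul, rep_herm, rep_herm]
      rw [hMH, hM]
      have hcyc : (V * Matrix.diagonal (fun j => ((b j ^ (1 - t) : ℝ) : ℂ)) * star V) *
            ((U * Matrix.diagonal (fun i => ((a i ^ t : ℝ) : ℂ)) * star U) *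
              ((U * Matrix.diagonal (fun i => ((a i ^ t : ℝ) : ℂ)) * star U) *
                (V * Matrix.diagonal (fun j => ((b j ^ (1 - t) : ℝ) : ℂ)) * star V)))
          = (V * Matrix.diagonal (fun j => ((b j ^ (1 - t) : ℝ) : ℂ)) * star V) *
            (((U * Matrix.diagonal (fun i => ((a i ^ t : ℝ) : ℂ)) * star U) *
              (U * Matrix.diagonal (fun i => ((a i ^ t : ℝ) : ℂ)) * star U)) *
                (V * Matrix.diagonal (fun j => ((b j ^ (1 - t) : ℝ) : ℂ)) * star V)) := by
        simp only [Matrix.mul_assoc]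
      rw [Matrix.mul_assoc, hcyc, Matrix.trace_mul_comm, Matrix.mul_assoc,
        rep_mul U hU1, rep_mul V hV1, trace_core]
    exact_mod_cast h1
  -- ‖N‖² = G
  have hN2 : ∑ i, ∑ j, ‖N i j‖ ^ 2 = G := by
    have h1 : ((∑ i, ∑ j, ‖N i j‖ ^ 2 : ℝ) : ℂ) = ((G : ℝ) : ℂ) := by
      rw [sum_norm_sq_eq_trace]
      have hNH : Nᴴ = (U * Matrix.diagonal (fun i => ((a i ^ (1 - t) : ℝ) : ℂ)) * star U) *
          (V * Matrix.diagonal (fun j => ((b j ^ t : ℝ) : ℂ)) * star V) := by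
        rw [hN, Matrix.conjTranspose_mul, rep_herm, rep_herm]
      rw [hNH, hN]
      have hcyc : (U * Matrix.diagonal (fun i => ((a i ^ (1 - t) : ℝ) : ℂ)) * star U) *
            ((V * Matrix.diagonal (fun j => ((b j ^ t : ℝ) : ℂ)) * star V) *
              ((V * Matrix.diagonal (fun j => ((b j ^ t : ℝ) : ℂ)) * star V) *
                (U * Matrix.diagonal (fun i => ((a i ^ (1 - t) : ℝ) : ℂ)) * star U)))
          = (U * Matrix.diagonal (fun i => ((a i ^ (1 - t) : ℝ) : ℂ)) * star U) *
            (((V * Matrix.diagonal (fun j => ((b j ^ t : ℝ) : ℂ)) * star V) *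
              (V * Matrix.diagonal (fun j => ((b j ^ t : ℝ) : ℂ)) * star V)) *
                (U * Matrix.diagonal (fun i => ((a i ^ (1 - t) : ℝ) : ℂ)) * star U)) := by
        simp only [Matrix.mul_assoc]
      rw [Matrix.mul_assoc, hcyc, Matrix.trace_mul_comm, Matrix.mul_assoc,
        rep_mul V hV1, rep_mul U hU1, Matrix.trace_mul_comm, trace_core]
    exact_mod_cast h1
  -- the sum of squares of A + B
  have hR2 : ∑ i, ∑ j,
      ‖((U * Matrix.diagonal (fun i => ((a i : ℝ) : ℂ)) * star U) +
        (V * Matrix.diagonal (fun j => ((b j : ℝ) : ℂ)) * star V)) i j‖ ^ 2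
      = (∑ i, a i * a i) + (∑ j, b j * b j) +
        2 * ∑ i, ∑ j, (a i * b j) * ‖(star U * V) i j‖ ^ 2 := by
    have h1 : ((∑ i, ∑ j, ‖((U * Matrix.diagonal (fun i => ((a i : ℝ) : ℂ)) * star U) +
        (V * Matrix.diagonal (fun j => ((b j : ℝ) : ℂ)) * star V)) i j‖ ^ 2 : ℝ) : ℂ)
        = (((∑ i, a i * a i) + (∑ j, b j * b j) +
          2 * ∑ i, ∑ j, (a i * b j) * ‖(star U * V) i j‖ ^ 2 : ℝ) : ℂ) := by
      rw [sum_norm_sq_eq_trace, Matrix.conjTranspose_add, rep_herm, rep_herm,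
        Matrix.add_mul, Matrix.mul_add, Matrix.mul_add, Matrix.trace_add, Matrix.trace_add,
        Matrix.trace_add,
        Matrix.trace_mul_comm (V * Matrix.diagonal (fun j => ((b j : ℝ) : ℂ)) * star V)
          (U * Matrix.diagonal (fun i => ((a i : ℝ) : ℂ)) * star U),
        trace_core, trace_core, trace_core, hU1, hV1, sum_w_one, sum_w_one]
      push_cast
      ring
    exact_mod_cast h1
  -- pointwise comparison
  have hkey : 2 * (F + G) ≤ (∑ i, a i * a i) + (∑ j, b j * b j) +
      2 * ∑ i, ∑ j, (a i * b j) * ‖(star U * V) i j‖ ^ 2 := by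
    have hSAA : (∑ i, a i * a i)
        = ∑ i, ∑ j, (a i * a i) * ‖(star U * V) i j‖ ^ 2 := by
      refine Finset.sum_congr rfl fun i _ => ?_
      rw [← Finset.mul_sum, hWr i, mul_one]
    have hSBB : (∑ j, b j * b j)
        = ∑ i, ∑ j, (b j * b j) * ‖(star U * V) i j‖ ^ 2 := by
      rw [Finset.sum_comm]
      refine Finset.sum_congr rfl fun j _ => ?_
      rw [← Finset.mul_sum, hWc j, mul_one]
    rw [hF, hG, hSAA, hSBB]
    have step : ∀ i j : Fin n,
        2 * (a i ^ t * a i ^ t * (b j ^ (1 - t) * b j ^ (1 - t)) * ‖(star U * V) i j‖ ^ 2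
          + a i ^ (1 - t) * a i ^ (1 - t) * (b j ^ t * b j ^ t) * ‖(star U * V) i j‖ ^ 2)
        ≤ (a i * a i) * ‖(star U * V) i j‖ ^ 2 + (b j * b j) * ‖(star U * V) i j‖ ^ 2
          + 2 * ((a i * b j) * ‖(star U * V) i j‖ ^ 2) := by
      intro i j
      have hs := scalar_core (ha i) (hb j) ht1 ht2
      have h2 := mul_le_mul_of_nonneg_right hs (hw0 i j)
      nlinarith [h2]
    calc 2 * ((∑ i, ∑ j, a i ^ t * a i ^ t * (b j ^ (1 - t) * b j ^ (1 - t)) *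
            ‖(star U * V) i j‖ ^ 2)
          + ∑ i, ∑ j, a i ^ (1 - t) * a i ^ (1 - t) * (b j ^ t * b j ^ t) *
            ‖(star U * V) i j‖ ^ 2)
        = ∑ i, ∑ j, 2 * (a i ^ t * a i ^ t * (b j ^ (1 - t) * b j ^ (1 - t)) *
            ‖(star U * V) i j‖ ^ 2
          + a i ^ (1 - t) * a i ^ (1 - t) * (b j ^ t * b j ^ t) *
            ‖(star U * V) i j‖ ^ 2) := by
          rw [← Finset.sum_add_distrib, Finset.mul_sum]
          refine Finset.sum_congr rfl fun i _ => ?_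
          rw [← Finset.sum_add_distrib, Finset.mul_sum]
      _ ≤ ∑ i, ∑ j, ((a i * a i) * ‖(star U * V) i j‖ ^ 2
            + (b j * b j) * ‖(star U * V) i j‖ ^ 2
            + 2 * ((a i * b j) * ‖(star U * V) i j‖ ^ 2)) := by
          exact Finset.sum_le_sum fun i _ => Finset.sum_le_sum fun j _ => step i j
      _ = (∑ i, ∑ j, (a i * a i) * ‖(star U * V) i j‖ ^ 2)
            + (∑ i, ∑ j, (b j * b j) * ‖(star U * V) i j‖ ^ 2)
            + 2 * ∑ i, ∑ j, (a i * b j) * ‖(star U * V) i j‖ ^ 2 := by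
          rw [Finset.mul_sum]
          rw [← Finset.sum_add_distrib, ← Finset.sum_add_distrib]
          refine Finset.sum_congr rfl fun i _ => ?_
          rw [Finset.mul_sum]
          rw [← Finset.sum_add_distrib, ← Finset.sum_add_distrib]
  -- final chain
  have htri := fro_triangle M N
  have hfM : frobeniusNorm' M = Real.sqrt F := by rw [frobeniusNorm', hM2]
  have hfN : frobeniusNorm' N = Real.sqrt G := by rw [frobeniusNorm', hN2]
  rw [hfM, hfN] at htri
  refine le_trans htri ?_
  have h1 : (Real.sqrt F + Real.sqrt G) ^ 2 ≤ 2 * (F + G) := by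
    nlinarith [Real.sq_sqrt hFnn, Real.sq_sqrt hGnn, sq_nonneg (Real.sqrt F - Real.sqrt G),
      Real.sqrt_nonneg F, Real.sqrt_nonneg G]
  have h2 : Real.sqrt F + Real.sqrt G = Real.sqrt ((Real.sqrt F + Real.sqrt G) ^ 2) :=
    (Real.sqrt_sq (by positivity)).symm
  calc Real.sqrt F + Real.sqrt G
      ≤ Real.sqrt (2 * (F + G)) := by rw [h2]; exact Real.sqrt_le_sqrt h1
    _ ≤ Real.sqrt ((∑ i, a i * a i) + (∑ j, b j * b j) +
          2 * ∑ i, ∑ j, (a i * b j) * ‖(star U * V) i j‖ ^ 2) := Real.sqrt_le_sqrt hkey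
    _ = _ := by rw [frobeniusNorm', hR2]

end CrossedHeinzAux

/-- **Bourin-type bound with sharp constant 1, Frobenius-norm case.**
For `n×n` positive semidefinite complex matrices `A, B` and `t ∈ [1/4, 3/4]`,
`‖A^t B^(1-t) + B^t A^(1-t)‖_F ≤ ‖A + B‖_F`. -/
theorem crossed_heinz_central_range_frobenius {n : ℕ} (A B : Matrix (Fin n) (Fin n) ℂ)
    (hA : A.PosSemidef) (hB : B.PosSemidef) (t : ℝ)
    (ht : t ∈ Set.Icc (1 / 4 : ℝ) (3 / 4)) :
    frobeniusNorm' (matRpow A t * matRpow B (1 - t) + matRpow B t * matRpow A (1 - t)) ≤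
      frobeniusNorm' (A + B) := by
  obtain ⟨ht1, ht2⟩ := ht
  rw [CrossedHeinzAux.matRpow_rep hA t, CrossedHeinzAux.matRpow_rep hB (1 - t),
    CrossedHeinzAux.matRpow_rep hB t, CrossedHeinzAux.matRpow_rep hA (1 - t)]
  conv_rhs => rw [CrossedHeinzAux.spectral_rep hA, CrossedHeinzAux.spectral_rep hB]
  exact CrossedHeinzAux.key_ineq t ht1 ht2 _ _ _ _
    hA.eigenvalues_nonneg hB.eigenvalues_nonneg
    (Matrix.mem_unitaryGroup_iff'.mp (hA.1.eigenvectorUnitary).2)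
    (Matrix.mem_unitaryGroup_iff.mp (hA.1.eigenvectorUnitary).2)
    (Matrix.mem_unitaryGroup_iff'.mp (hB.1.eigenvectorUnitary).2)
    (Matrix.mem_unitaryGroup_iff.mp (hB.1.eigenvectorUnitary).2)
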